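/- arXiv:1511.00396 — 2 statements merged into one kernel-verified Lean document; each statement's English description precedes it below -/
import Mathlib

section
/- Let K be a field and let 0 → X →f Y →g Z → 0 be a short exact sequence of modules over a K-algebra A. Suppose there exist scalars t₁, t₂ ∈ K with t₁ ≠ t₂ and an automorphism τ of Y such that τ∘f = t₁·f and g∘τ = t₂·g. Then the sequence splits, i.e., f admits a left inverse (equivalently, X is a direct summand of Y). -/
/-- If a short exact sequence 0 → X →f Y →g Z → 0 of modules over a
K-algebra A admits an automorphism τ of Y with τ∘f = t₁·f and g∘τ = t₂·g for
distinct scalars t₁ ≠ t₂ in K, then the sequence splits: f has a left inverse. -/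
theorem stmt2 {K : Type*} [Field K] {A : Type*} [Ring A] [Algebra K A]
    {X Y Z : Type*}
    [AddCommGroup X] [AddCommGroup Y] [AddCommGroup Z]
    [Module A X] [Module A Y] [Module A Z]
    [Module K X] [Module K Y] [Module K Z]
    [IsScalarTower K A X] [IsScalarTower K A Y] [IsScalarTower K A Z]
    [SMulCommClass K A Y] [SMulCommClass K A Z]
    (f : X →ₗ[A] Y) (g : Y →ₗ[A] Z)
    (hf : Function.Injective f) (hg : Function.Surjective g)
    (hfg : LinearMap.range f = LinearMap.ker g)
    (t₁ t₂ : K) (ht : t₁ ≠ t₂) (τ : Y ≃ₗ[A] Y)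
    (h₁ : (τ : Y →ₗ[A] Y) ∘ₗ f = t₁ • f)
    (h₂ : g ∘ₗ (τ : Y →ₗ[A] Y) = t₂ • g) :
    ∃ h : Y →ₗ[A] X, h ∘ₗ f = LinearMap.id := by
  set σ : Y →ₗ[A] Y := (τ : Y →ₗ[A] Y) - t₂ • LinearMap.id with hσ
  have hmem : ∀ y, σ y ∈ LinearMap.range f := by
    intro y
    rw [hfg, LinearMap.mem_ker]
    have := congrFun (congrArg DFunLike.coe h₂) y
    simp only [LinearMap.comp_apply, LinearMap.smul_apply] at this
    simp only [hσ, LinearMap.sub_apply, LinearMap.smul_apply, LinearMap.id_apply,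
      map_sub, map_smul]
    rw [sub_eq_zero, this, LinearMap.map_smul_of_tower]
  let e : X ≃ₗ[A] LinearMap.range f := LinearEquiv.ofInjective f hf
  let h : Y →ₗ[A] X :=
    (t₁ - t₂)⁻¹ • ((e.symm : LinearMap.range f →ₗ[A] X) ∘ₗ
      σ.codRestrict (LinearMap.range f) hmem)
  refine ⟨h, ?_⟩
  ext x
  have hσf : σ (f x) = (t₁ - t₂) • f x := by
    have := congrFun (congrArg DFunLike.coe h₁) x
    simp only [LinearMap.comp_apply, LinearMap.smul_apply] at this
    simp [hσ, this, sub_smul]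
  have key : (σ.codRestrict (LinearMap.range f) hmem) (f x) = e ((t₁ - t₂) • x) := by
    apply Subtype.ext
    simp only [LinearMap.codRestrict_apply, hσf]
    have : (e ((t₁ - t₂) • x) : Y) = f ((t₁ - t₂) • x) := rfl
    rw [this, LinearMap.map_smul_of_tower]
  show h (f x) = x
  have hx : h (f x) = (t₁ - t₂)⁻¹ • ((t₁ - t₂) • x) := by
    simp only [h, LinearMap.smul_apply, LinearMap.comp_apply, key, LinearEquiv.coe_coe,
      LinearEquiv.symm_apply_apply]
  rw [hx, smul_smul, inv_mul_cancel₀ (sub_ne_zero.mpr ht), one_smul]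
end

section
/- Let 0 → X →f Y₁ ⊕ Y₂ →g Z → 0 be a short exact sequence of modules over a ring R, with components f = (f₁, f₂) and g = (g₁, g₂). Suppose s ∈ End(X) and r ∈ End(Z) are idempotents satisfying f₁∘s = 0, f₂∘s = f₂, r∘g₁ = 0, and r∘g₂ = g₂. Then the restricted sequence 0 → im(s) → Y₂ → im(r) → 0, where the first map is x ↦ f₂(x) and the second is y ↦ g₂(y), is a short exact sequence; moreover the original sequence is isomorphic to the direct sum of this sequence with the sequence 0 → ker(s) → Y₁ → ker(r) → 0 obtained from f₁ and the corestriction of g₁. -/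
/-- Let 0 → X →f Y₁ ⊕ Y₂ →g Z → 0 be a short exact sequence of
R-modules, with components f = (f₁,f₂), g = (g₁,g₂). Suppose s ∈ End(X),
r ∈ End(Z) are idempotents with f₁∘s = 0, f₂∘s = f₂, r∘g₁ = 0, r∘g₂ = g₂. Then
0 → im(s) → Y₂ → im(r) → 0 (with maps induced by f₂ and g₂) is a short exact
sequence, and the original sequence is isomorphic to the direct sum of this
sequence with 0 → ker(s) → Y₁ → ker(r) → 0 (obtained from f₁ and the
corestriction of g₁). -/
theorem stmt11 {R : Type*} [Ring R] {X Y₁ Y₂ Z : Type*}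
    [AddCommGroup X] [AddCommGroup Y₁] [AddCommGroup Y₂] [AddCommGroup Z]
    [Module R X] [Module R Y₁] [Module R Y₂] [Module R Z]
    (f : X →ₗ[R] Y₁ × Y₂) (g : Y₁ × Y₂ →ₗ[R] Z)
    (hf : Function.Injective f) (hg : Function.Surjective g)
    (hfg : LinearMap.range f = LinearMap.ker g)
    (s : X →ₗ[R] X) (r : Z →ₗ[R] Z)
    (hss : s ∘ₗ s = s) (hrr : r ∘ₗ r = r)
    (hf₁s : (LinearMap.fst R Y₁ Y₂ ∘ₗ f) ∘ₗ s = 0)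
    (hf₂s : (LinearMap.snd R Y₁ Y₂ ∘ₗ f) ∘ₗ s = LinearMap.snd R Y₁ Y₂ ∘ₗ f)
    (hrg₁ : r ∘ₗ (g ∘ₗ LinearMap.inl R Y₁ Y₂) = 0)
    (hrg₂ : r ∘ₗ (g ∘ₗ LinearMap.inr R Y₁ Y₂) = g ∘ₗ LinearMap.inr R Y₁ Y₂) :
    -- exactness of 0 → im(s) → Y₂ → im(r) → 0
    Function.Injective ((LinearMap.snd R Y₁ Y₂ ∘ₗ f) ∘ₗ
        (LinearMap.range s).subtype) ∧
    LinearMap.range ((LinearMap.snd R Y₁ Y₂ ∘ₗ f) ∘ₗ (LinearMap.range s).subtype)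
      = LinearMap.ker (g ∘ₗ LinearMap.inr R Y₁ Y₂) ∧
    LinearMap.range (g ∘ₗ LinearMap.inr R Y₁ Y₂) = LinearMap.range r ∧
    -- the original sequence is the direct sum of the two restricted sequences
    ∃ (eX : X ≃ₗ[R] (↥(LinearMap.ker s) × ↥(LinearMap.range s)))
      (eZ : Z ≃ₗ[R] (↥(LinearMap.ker r) × ↥(LinearMap.range r))),
      (LinearMap.prodMap
          ((LinearMap.fst R Y₁ Y₂ ∘ₗ f) ∘ₗ (LinearMap.ker s).subtype)
          ((LinearMap.snd R Y₁ Y₂ ∘ₗ f) ∘ₗ (LinearMap.range s).subtype)) ∘ₗ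
        (eX : X →ₗ[R] ↥(LinearMap.ker s) × ↥(LinearMap.range s)) = f ∧
      LinearMap.prodMap
          (LinearMap.codRestrict (LinearMap.ker r) (g ∘ₗ LinearMap.inl R Y₁ Y₂)
            (fun y => LinearMap.mem_ker.mpr
              (by simpa using LinearMap.congr_fun hrg₁ y)))
          (LinearMap.codRestrict (LinearMap.range r) (g ∘ₗ LinearMap.inr R Y₁ Y₂)
            (fun y => LinearMap.mem_range.mpr
              ⟨(g ∘ₗ LinearMap.inr R Y₁ Y₂) y, LinearMap.congr_fun hrg₂ y⟩))
        = (eZ : Z →ₗ[R] ↥(LinearMap.ker r) × ↥(LinearMap.range r)) ∘ₗ g :=  by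
  have hs : ∀ x, s (s x) = s x := fun x => LinearMap.congr_fun hss x
  have hr : ∀ z, r (r z) = r z := fun z => LinearMap.congr_fun hrr z
  have h1 : ∀ x, (f (s x)).1 = 0 := fun x => LinearMap.congr_fun hf₁s x
  have h2 : ∀ x, (f (s x)).2 = (f x).2 := fun x => LinearMap.congr_fun hf₂s x
  have hg1 : ∀ y, r (g (y, 0)) = 0 := fun y => LinearMap.congr_fun hrg₁ y
  have hg2 : ∀ y, r (g (0, y)) = g (0, y) := fun y => LinearMap.congr_fun hrg₂ y
  have hgf : ∀ x, g (f x) = 0 := fun x => by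
    have : f x ∈ LinearMap.ker g := hfg ▸ LinearMap.mem_range_self f x
    exact this
  -- injectivity
  have inj : Function.Injective ((LinearMap.snd R Y₁ Y₂ ∘ₗ f) ∘ₗ
      (LinearMap.range s).subtype) := by
    intro a b hab
    obtain ⟨x, hx⟩ := a.2
    obtain ⟨y, hy⟩ := b.2
    apply Subtype.ext
    apply hf
    have ha1 : (f a.1).1 = 0 := by rw [← hx]; exact h1 x
    have hb1 : (f b.1).1 = 0 := by rw [← hy]; exact h1 y
    have hab2 : (f a.1).2 = (f b.1).2 := hab
    exact Prod.ext (ha1.trans hb1.symm) hab2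
  refine ⟨inj, ?_, ?_, ?_⟩
  · ext y
    simp only [LinearMap.mem_range, LinearMap.mem_ker, LinearMap.coe_comp,
      Function.comp_apply, Submodule.coe_subtype, LinearMap.snd_apply,
      LinearMap.inr_apply]
    constructor
    · rintro ⟨⟨a, ha⟩, rfl⟩
      obtain ⟨x, rfl⟩ := ha
      have : ((0 : Y₁), (f (s x)).2) = f (s x) := by
        exact Prod.ext (h1 x).symm rfl
      rw [this]; exact hgf (s x)
    · intro hy
      have : ((0 : Y₁), y) ∈ LinearMap.ker g := hy
      rw [← hfg] at this
      obtain ⟨x, hx⟩ := this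
      refine ⟨⟨s x, x, rfl⟩, ?_⟩
      simp only
      rw [h2 x, hx]
  · ext z
    simp only [LinearMap.mem_range, LinearMap.coe_comp, Function.comp_apply,
      LinearMap.inr_apply]
    constructor
    · rintro ⟨y, rfl⟩
      exact ⟨g (0, y), hg2 y⟩
    · rintro ⟨w, rfl⟩
      obtain ⟨⟨y₁, y₂⟩, rfl⟩ := hg w
      have hsplit : ((y₁, y₂) : Y₁ × Y₂) = (y₁, 0) + (0, y₂) := by simp
      refine ⟨y₂, ?_⟩
      rw [hsplit, map_add, map_add, hg1 y₁, hg2 y₂, zero_add]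
  · -- build eX
    have hkerX : ∀ x : X, x - s x ∈ LinearMap.ker s := fun x => by
      simp [LinearMap.mem_ker, map_sub, hs x]
    have hkerZ : ∀ z : Z, z - r z ∈ LinearMap.ker r := fun z => by
      simp [LinearMap.mem_ker, map_sub, hr z]
    let FX : X →ₗ[R] ↥(LinearMap.ker s) × ↥(LinearMap.range s) :=
      ((LinearMap.id - s).codRestrict (LinearMap.ker s) hkerX).prod
        (s.codRestrict (LinearMap.range s) (fun x => ⟨x, rfl⟩))
    let GX : ↥(LinearMap.ker s) × ↥(LinearMap.range s) →ₗ[R] X :=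
      (LinearMap.ker s).subtype.coprod (LinearMap.range s).subtype
    have hsa : ∀ a : ↥(LinearMap.ker s), s a.1 = 0 := fun a => a.2
    have hsb : ∀ b : ↥(LinearMap.range s), s b.1 = b.1 := fun b => by
      obtain ⟨x, hx⟩ := b.2; rw [← hx]; exact hs x
    let eX : X ≃ₗ[R] ↥(LinearMap.ker s) × ↥(LinearMap.range s) :=
      LinearEquiv.ofLinear FX GX
        (by
          apply LinearMap.ext; rintro ⟨a, b⟩
          have h1 : s ((a : X) + (b : X)) = b := by
            rw [map_add, hsa a, hsb b, zero_add]
          refine Prod.ext (Subtype.ext ?_) (Subtype.ext ?_) <;>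
            simp [FX, GX, LinearMap.codRestrict, h1])
        (by
          apply LinearMap.ext; intro x
          simp [FX, GX, LinearMap.codRestrict])
    have hra : ∀ a : ↥(LinearMap.ker r), r a.1 = 0 := fun a => a.2
    have hrb : ∀ b : ↥(LinearMap.range r), r b.1 = b.1 := fun b => by
      obtain ⟨z, hz⟩ := b.2; rw [← hz]; exact hr z
    let FZ : Z →ₗ[R] ↥(LinearMap.ker r) × ↥(LinearMap.range r) :=
      ((LinearMap.id - r).codRestrict (LinearMap.ker r) hkerZ).prod
        (r.codRestrict (LinearMap.range r) (fun z => ⟨z, rfl⟩))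
    let GZ : ↥(LinearMap.ker r) × ↥(LinearMap.range r) →ₗ[R] Z :=
      (LinearMap.ker r).subtype.coprod (LinearMap.range r).subtype
    let eZ : Z ≃ₗ[R] ↥(LinearMap.ker r) × ↥(LinearMap.range r) :=
      LinearEquiv.ofLinear FZ GZ
        (by
          apply LinearMap.ext; rintro ⟨a, b⟩
          have h1 : r ((a : Z) + (b : Z)) = b := by
            rw [map_add, hra a, hrb b, zero_add]
          refine Prod.ext (Subtype.ext ?_) (Subtype.ext ?_) <;>
            simp [FZ, GZ, LinearMap.codRestrict, h1])
        (by
          apply LinearMap.ext; intro z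
          simp [FZ, GZ, LinearMap.codRestrict])
    refine ⟨eX, eZ, ?_, ?_⟩
    · apply LinearMap.ext; intro x
      have key1 : (f (x - s x)).1 = (f x).1 := by
        rw [map_sub]; simp [h1 x]
      have key2 : (f (s x)).2 = (f x).2 := h2 x
      refine Prod.ext ?_ ?_
      · simp only [eX, FX, LinearMap.codRestrict, LinearMap.prodMap_apply,
          LinearMap.coe_comp, Function.comp_apply]
        simp [h1 x]
      · simp [eX, FX, LinearMap.codRestrict, key2]
    · apply LinearMap.ext; rintro ⟨y₁, y₂⟩
      have hsplit : ((y₁, y₂) : Y₁ × Y₂) = (y₁, 0) + (0, y₂) := by simp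
      have hrg : r (g (y₁, y₂)) = g (0, y₂) := by
        rw [hsplit, map_add, map_add, hg1 y₁, hg2 y₂, zero_add]
      have hsub : g (y₁, y₂) - r (g (y₁, y₂)) = g (y₁, 0) := by
        rw [hrg, hsplit, map_add]; abel
      have hsplit2 : g (y₁, 0) = g (y₁, y₂) - g (0, y₂) := by
        rw [← hrg, hsub]
      refine Prod.ext (Subtype.ext ?_) (Subtype.ext ?_)
      · simp [eZ, FZ, LinearMap.codRestrict, hrg, hsplit2]
      · simp [eZ, FZ, LinearMap.codRestrict, hrg]
end
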